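/- Let G be a finite graph of matching width at least t, let c be a positive integer, and let Z be a c-NSOBDD computing the function represented by CNF(G). Then |Z| ≥ 2^{t/(2c−1)}. -/

import Mathlib

/-- The variables of the CNF `CNF(G)`: one variable `X_u` per vertex `u`
(left summand) and one variable `X_{u,v}` per edge `{u,v}` (right summand). -/
def CNFVar {V : Type} (G : SimpleGraph V) : Type := V ⊕ G.edgeSet

/-- The Boolean function represented by `CNF(G)`: an assignment `a` is
satisfying iff for every edge `{u,v}` of `G` the clause
`(X_u ∨ X_{u,v} ∨ X_v)` is satisfied. -/
def cnfSat {V : Type} (G : SimpleGraph V) (a : CNFVar G → Bool) : Prop :=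
  ∀ (e : G.edgeSet) (u v : V), e.1 = s(u, v) →
    a (Sum.inl u) = true ∨ a (Sum.inr e) = true ∨ a (Sum.inl v) = true

/-- A nondeterministic branching program over the variable set `Var`:
a DAG (nodes are `Fin n`, every edge goes from a smaller to a larger node)
with a designated root and leaf, where some edges are labeled by literals
(`(x, true)` is the positive literal of `x`, `(x, false)` the negative one).
Its size is the number `n` of nodes. -/
structure NBP (Var : Type) where
  n : ℕ
  E : Type
  src : E → Fin n
  tgt : E → Fin n
  acyc : ∀ e, src e < tgt e
  root : Fin n
  leaf : Fin n
  label : E → Option (Var × Bool)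

namespace NBP

variable {Var : Type} (Z : NBP Var)

/-- A root-leaf path, given as the list of its edges. -/
def IsRootLeafPath (p : List Z.E) : Prop :=
  p.Chain' (fun e f => Z.tgt e = Z.src f) ∧
  p.head?.map Z.src = some Z.root ∧
  p.getLast?.map Z.tgt = some Z.leaf

/-- `A(P)`: the set of literals labeling the edges of the path `p`. -/
def lits (p : List Z.E) : Set (Var × Bool) :=
  {l | ∃ e ∈ p, Z.label e = some l}

/-- A path is consistent if no variable occurs on it both positively and
negatively. A consistent root-leaf path is a computational path. -/
def Consistent (p : List Z.E) : Prop :=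
  ∀ x : Var, ¬ ((x, true) ∈ Z.lits p ∧ (x, false) ∈ Z.lits p)

/-- `Z` computes the Boolean function `F`: an assignment satisfies `F` iff
some computational path of `Z` is consistent with it. -/
def Computes (F : (Var → Bool) → Prop) : Prop :=
  ∀ a : Var → Bool,
    F a ↔ ∃ p : List Z.E, Z.IsRootLeafPath p ∧ Z.Consistent p ∧
      ∀ l ∈ Z.lits p, a l.1 = l.2

/-- `Z` is a nondeterministic semantic `c`-OBDD: there is an ordering `σ` of
the variables (a permutation, given by an injection into `ℕ`) such that every
computational path decomposes into `c` consecutive pieces, on each of which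
each variable occurs at most once and the labeled variables appear in strictly
increasing `σ`-order. -/
def IsNSOBDD (c : ℕ) : Prop :=
  ∃ σ : Var → ℕ, Function.Injective σ ∧
    ∀ p : List Z.E, Z.IsRootLeafPath p → Z.Consistent p →
      ∃ ps : List (List Z.E), ps.length = c ∧ ps.flatten = p ∧
        ∀ q ∈ ps, ((q.filterMap Z.label).map (fun l => σ l.1)).Pairwise (· < ·)

end NBP

/-- `M` is a matching of `G` all of whose edges cross the cut `(A, Aᶜ)`:
every element of `M` is an edge of `G` with one end in `A` and the other
outside `A`, and no two distinct elements of `M` share a vertex. -/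
def IsCutMatching {V : Type} (G : SimpleGraph V) (A : Set V) (M : Finset (Sym2 V)) : Prop :=
  (∀ e ∈ M, e ∈ G.edgeSet) ∧
  (∀ e ∈ M, ∃ u v : V, e = s(u, v) ∧ u ∈ A ∧ v ∉ A) ∧
  (∀ e₁ ∈ M, ∀ e₂ ∈ M, e₁ ≠ e₂ → ∀ x : V, x ∈ e₁ → x ∉ e₂)

/-- The matching width of `G` is at most `w`: some ordering of the vertices
is such that, for every prefix, every matching consisting of edges between
the prefix and the rest has size at most `w`. -/
def mwLE {V : Type} [Fintype V] (G : SimpleGraph V) (w : ℕ) : Prop :=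
  ∃ σ : Fin (Fintype.card V) ≃ V,
    ∀ (i : ℕ) (M : Finset (Sym2 V)),
      IsCutMatching G {v : V | ((σ.symm v : Fin (Fintype.card V)) : ℕ) < i} M →
        M.card ≤ w

/-- The matching width of a finite graph. -/
noncomputable def mw {V : Type} [Fintype V] (G : SimpleGraph V) : ℕ :=
  sInf {w | mwLE G w}

namespace NBP
variable {Var : Type} (Z : NBP Var)

def mid (q : List Z.E) (b : Fin Z.n) : Fin Z.n :=
  match q with
  | [] => b
  | e :: _ => Z.src e

def PathFT (p : List Z.E) (a b : Fin Z.n) : Prop :=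
  p.Chain' (fun e f => Z.tgt e = Z.src f) ∧ (∀ e, p.getLast? = some e → Z.tgt e = b) ∧
    a = Z.mid p b

variable {Z}

theorem pathFT_append {p q : List Z.E} {a b d : Fin Z.n}
    (hp : Z.PathFT p a b) (hq : Z.PathFT q b d) : Z.PathFT (p ++ q) a d := by
  obtain ⟨cp, lp, sp⟩ := hp
  obtain ⟨cq, lq, sq⟩ := hq
  refine ⟨List.isChain_append.2 ⟨cp, cq, ?_⟩, ?_, ?_⟩
  · intro x hx y hy
    rw [lp x hx]
    cases q with
    | nil => simp at hy
    | cons e q' =>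
        simp at hy
        subst hy
        exact sq
  · intro e he
    cases q with
    | nil =>
        simp at he
        rw [lp e he]
        exact sq
    | cons f q' =>
        rw [List.getLast?_append_of_ne_nil _ (by simp)] at he
        exact lq e he
  · cases p with
    | nil => exact sp.trans sq
    | cons e p' => exact sp

theorem pathFT_split {p q : List Z.E} {a d : Fin Z.n}
    (h : Z.PathFT (p ++ q) a d) : Z.PathFT p a (Z.mid q d) ∧ Z.PathFT q (Z.mid q d) d := by
  obtain ⟨c, l, s⟩ := h
  replace c := List.isChain_append.1 c
  obtain ⟨cp, cq, link⟩ := c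
  constructor
  · refine ⟨cp, ?_, ?_⟩
    · intro e he
      cases q with
      | nil => exact l e (by simpa using he)
      | cons f q' => exact link e he f (by simp)
    · cases p with
      | nil => exact s
      | cons e p' => exact s
  · refine ⟨cq, ?_, rfl⟩
    intro e he
    apply l
    cases q with
    | nil => simp at he
    | cons f q' => rwa [List.getLast?_append_of_ne_nil _ (by simp)]

theorem pathFT_nil (b : Fin Z.n) : Z.PathFT [] b b := ⟨List.isChain_nil, by simp, rfl⟩

theorem pathFT_lt {p : List Z.E} {a b : Fin Z.n} (h : Z.PathFT p a b) (hne : p ≠ []) :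
    a < b := by
  induction p generalizing a with
  | nil => exact absurd rfl hne
  | cons e q ih =>
      have h2 := pathFT_split (p := [e]) (q := q) (by simpa using h)
      obtain ⟨⟨_, l1, s1⟩, hq⟩ := h2
      have h3 : Z.tgt e = Z.mid q b := l1 e (by simp)
      have h4 : a = Z.src e := s1
      rcases eq_or_ne q [] with rfl | hqne
      · have : Z.mid ([] : List Z.E) b = b := rfl
        rw [h4, ← this, ← h3]; exact Z.acyc e
      · calc a = Z.src e := h4
          _ < Z.tgt e := Z.acyc e
          _ = Z.mid q b := h3
          _ < b := ih hq hqne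

theorem pathFT_of_rootLeaf {p : List Z.E} (h : Z.IsRootLeafPath p) :
    Z.PathFT p Z.root Z.leaf ∧ p ≠ [] := by
  obtain ⟨c, hh, hl⟩ := h
  cases p with
  | nil => simp at hh
  | cons e q =>
      refine ⟨⟨c, ?_, ?_⟩, by simp⟩
      · intro f hf
        rw [hf] at hl; simpa using hl
      · simp at hh
        exact hh.symm

theorem rootLeaf_of_pathFT {p : List Z.E} (h : Z.PathFT p Z.root Z.leaf) (hne : p ≠ []) :
    Z.IsRootLeafPath p := by
  obtain ⟨c, l, s⟩ := h
  refine ⟨c, ?_, ?_⟩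
  · cases p with
    | nil => exact absurd rfl hne
    | cons e q =>
        simp
        exact s.symm
  · cases hg : p.getLast? with
    | none => exact absurd (List.getLast?_eq_none_iff.1 hg) hne
    | some e => simp [l e hg]


variable {Var : Type} {Z : NBP Var}

variable (Z) in
def splice (P : Z.E → Bool) : List (List Z.E) → List (List Z.E) → List Z.E
  | q :: L, q' :: L' => q.takeWhile P ++ (q'.dropWhile P ++ splice P L L')
  | _, _ => []

variable (Z) in
def nodeSeq (P : Z.E → Bool) : List (List Z.E) → List (Fin Z.n)
  | [] => []
  | q :: L => Z.mid (q.dropWhile P ++ L.flatten) Z.leaf ::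
      Z.mid L.flatten Z.leaf :: nodeSeq P L

theorem length_nodeSeq (P : Z.E → Bool) (L : List (List Z.E)) :
    (Z.nodeSeq P L).length = 2 * L.length := by
  induction L with
  | nil => rfl
  | cons q L ih => simp [nodeSeq, ih]; ring

theorem nodeSeq_getD_last (P : Z.E → Bool) (L : List (List Z.E)) (hL : L ≠ []) :
    (Z.nodeSeq P L).getD (2 * L.length - 1) Z.leaf = Z.leaf := by
  induction L with
  | nil => exact absurd rfl hL
  | cons q L ih =>
      rcases eq_or_ne L [] with rfl | hne
      · simp [nodeSeq, mid]
      · have h1 : 1 ≤ L.length := List.length_pos_iff.2 hne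
        have h2 : 2 * (q :: L).length - 1 = (2 * L.length - 1) + 2 := by
          simp [List.length_cons]; omega
        rw [h2]
        simpa [nodeSeq] using ih hne

theorem mem_splice {P : Z.E → Bool} {L L' : List (List Z.E)} {e : Z.E}
    (h : e ∈ Z.splice P L L') :
    (∃ q ∈ L, e ∈ q.takeWhile P) ∨ (∃ q ∈ L', e ∈ q.dropWhile P) := by
  induction L generalizing L' with
  | nil => simp [splice] at h
  | cons q M ih =>
      cases L' with
      | nil => simp [splice] at h
      | cons q' M' =>
          simp only [splice, List.mem_append] at h
          rcases h with h | h | h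
          · exact Or.inl ⟨q, by simp, h⟩
          · exact Or.inr ⟨q', by simp, h⟩
          · rcases ih h with ⟨r, hr, he⟩ | ⟨r, hr, he⟩
            · exact Or.inl ⟨r, by simp [hr], he⟩
            · exact Or.inr ⟨r, by simp [hr], he⟩

theorem glue {P : Z.E → Bool} {L L' : List (List Z.E)} {a : Fin Z.n}
    (hL : Z.PathFT L.flatten a Z.leaf) (hL' : Z.PathFT L'.flatten a Z.leaf)
    (hseq : Z.nodeSeq P L = Z.nodeSeq P L') :
    Z.PathFT (Z.splice P L L') a Z.leaf := by
  induction L generalizing L' a with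
  | nil =>
      cases L' with
      | nil => exact hL
      | cons q' M' => simp [nodeSeq] at hseq
  | cons q M ih =>
      cases L' with
      | nil => simp [nodeSeq] at hseq
      | cons q' M' =>
          simp only [nodeSeq, List.cons.injEq] at hseq
          obtain ⟨hx, hy, hrest⟩ := hseq
          -- decompose hL
          have e1 : (q :: M).flatten = q.takeWhile P ++ (q.dropWhile P ++ M.flatten) := by
            rw [← List.append_assoc, List.takeWhile_append_dropWhile, List.flatten_cons]
          rw [e1] at hL
          obtain ⟨h1, h2⟩ := pathFT_split hL
          obtain ⟨h3, h4⟩ := pathFT_split h2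
          have e2 : (q' :: M').flatten = q'.takeWhile P ++ (q'.dropWhile P ++ M'.flatten) := by
            rw [← List.append_assoc, List.takeWhile_append_dropWhile, List.flatten_cons]
          rw [e2] at hL'
          obtain ⟨h1', h2'⟩ := pathFT_split hL'
          obtain ⟨h3', h4'⟩ := pathFT_split h2'
          -- node equalities
          rw [← hx] at h3'
          rw [← hy] at h3' h4'
          have hrec := ih h4 h4' hrest
          show Z.PathFT (q.takeWhile P ++ (q'.dropWhile P ++ Z.splice P M M')) a Z.leaf
          exact pathFT_append h1 (pathFT_append h3' hrec)



theorem dropWhile_above {σ : Var → ℕ} {θ : ℕ} {q : List Z.E}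
    [∀ e : Z.E, Decidable (∀ l, Z.label e = some l → σ l.1 < θ)]
    (hsort : ((q.filterMap Z.label).map (fun l => σ l.1)).Pairwise (· < ·))
    {e : Z.E}
    (he : e ∈ q.dropWhile (fun e => decide (∀ l, Z.label e = some l → σ l.1 < θ)))
    {l : Var × Bool} (hl : Z.label e = some l) : θ ≤ σ l.1 := by
  set P : Z.E → Bool := fun e => decide (∀ l, Z.label e = some l → σ l.1 < θ) with hP
  cases hd : q.dropWhile P with
  | nil => rw [hd] at he; simp at he
  | cons e₀ rest =>
      have hlen : 0 < (q.dropWhile P).length := by rw [hd]; simp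
      have h0 := List.dropWhile_get_zero_not (p := P) q hlen
      have hget : (q.dropWhile P).get ⟨0, hlen⟩ = e₀ := by simp [hd]
      rw [hget] at h0
      have hP0 : ¬ (∀ l, Z.label e₀ = some l → σ l.1 < θ) := by
        simpa [hP] using h0
      push_neg at hP0
      obtain ⟨l₀, hl₀, hθ₀⟩ := hP0
      -- sortedness of the suffix labels
      have hq : q = q.takeWhile P ++ (e₀ :: rest) := by
        rw [← hd, List.takeWhile_append_dropWhile]
      rw [hq, List.filterMap_append, List.map_append] at hsort
      have hsuffix := (List.pairwise_append.1 hsort).2.1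
      have hfm : ((e₀ :: rest).filterMap Z.label) = l₀ :: rest.filterMap Z.label := by
        simp [List.filterMap_cons, hl₀]
      rw [hfm] at hsuffix
      rw [hd] at he
      rcases List.mem_cons.1 he with rfl | hmem
      · rw [hl] at hl₀
        injection hl₀ with h'
        rw [h']
        exact hθ₀
      · have hlm : l ∈ rest.filterMap Z.label := List.mem_filterMap.2 ⟨e, hmem, hl⟩
        rw [List.map_cons] at hsuffix
        have := List.rel_of_pairwise_cons hsuffix (List.mem_map.2 ⟨l, hlm, rfl⟩)
        omega

end NBP

/-- Let `G` be a finite graph of matching width at least `t`, `c` positive,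
and `Z` a `c`-NSOBDD computing the function represented by `CNF(G)`.
Then `|Z| ≥ 2^(t/(2c-1))`. -/
theorem stmt7 {V : Type} [Fintype V] (G : SimpleGraph V) (t c : ℕ) (hc : 1 ≤ c)
    (hmw : t ≤ mw G)
    (Z : NBP (CNFVar G))
    (hcomp : Z.Computes (cnfSat G))
    (hobdd : Z.IsNSOBDD c) :
    (2 : ℝ) ^ ((t : ℝ) / (2 * (c : ℝ) - 1)) ≤ (Z.n : ℝ) := by
  classical
  have hn0 : 0 < Z.n := Fin.pos Z.root
  have hn1 : (1 : ℝ) ≤ (Z.n : ℝ) := by exact_mod_cast hn0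
  rcases Nat.eq_zero_or_pos t with rfl | ht
  · simpa using hn1
  obtain ⟨σ, hσinj, hdecomp⟩ := hobdd
  letI : LinearOrder V := LinearOrder.lift' (fun v => σ (Sum.inl v))
    (fun a b h => by injection hσinj h)
  set σV := monoEquivOfFin V rfl with hσV
  have hnot : ¬ mwLE G (t - 1) := by
    intro h
    have h2 : mw G ≤ t - 1 := Nat.sInf_le h
    omega
  rw [mwLE] at hnot
  push_neg at hnot
  obtain ⟨i, M, hM, hcard⟩ := hnot σV.toEquiv
  have htM : t ≤ M.card := by omega
  set A : Set V := {v : V | ((σV.toEquiv.symm v : Fin (Fintype.card V)) : ℕ) < i} with hA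
  have hedge := hM.1
  have hdisj := hM.2.2
  have hMne : M.Nonempty := Finset.card_pos.1 (by omega)
  obtain ⟨e₁, he₁⟩ := hMne
  haveI : Nonempty V := ⟨(hM.2.1 e₁ he₁).choose⟩
  choose! ue ve heq hua hvb using hM.2.1
  -- order transfer: below-A vertex variables precede outside-A vertex variables
  have horder : ∀ u' ∈ A, ∀ w' ∉ A, σ (Sum.inl u') < σ (Sum.inl w') := by
    intro u' hu w' hw
    have h1 : σV.symm u' < σV.symm w' := by
      rw [hA, Set.mem_setOf_eq] at hu hw
      have hu2 : ((σV.symm u' : Fin (Fintype.card V)) : ℕ) < i := hu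
      have hw2 : ¬ ((σV.symm w' : Fin (Fintype.card V)) : ℕ) < i := hw
      rw [Fin.lt_def]
      omega
    have h2 : u' < w' := (OrderIso.lt_iff_lt σV.symm).1 h1
    exact h2
  set θ : ℕ := sInf {k | ∃ w : V, w ∉ A ∧ σ (Sum.inl w) = k} with hθ
  have hAcompl_ne : {k | ∃ w : V, w ∉ A ∧ σ (Sum.inl w) = k}.Nonempty :=
    ⟨σ (Sum.inl (ve e₁)), ve e₁, hvb e₁ he₁, rfl⟩
  have hbelow : ∀ w ∈ A, σ (Sum.inl w) < θ := by
    intro w hw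
    obtain ⟨w₀, hw₀, hkeq⟩ := Nat.sInf_mem hAcompl_ne
    rw [hθ, ← hkeq]
    exact horder w hw w₀ hw₀
  have habove : ∀ w, w ∉ A → θ ≤ σ (Sum.inl w) := fun w hw => Nat.sInf_le ⟨w, hw, rfl⟩
  set P : Z.E → Bool := fun e => decide (∀ l, Z.label e = some l → σ l.1 < θ) with hPdef
  -- the assignments
  set asg : Finset (Sym2 V) → CNFVar G → Bool := fun S x =>
    match x with
    | Sum.inl w => decide (¬ ∃ e ∈ M, (e ∉ S ∧ w = ue e) ∨ (e ∈ S ∧ w = ve e))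
    | Sum.inr f => decide (f.1 ∉ M) with hasg
  have hmemu : ∀ e ∈ M, ue e ∈ e := by
    intro e he
    have h0 := Sym2.mem_mk_left (ue e) (ve e)
    rwa [← heq e he] at h0
  have hmemv : ∀ e ∈ M, ve e ∈ e := by
    intro e he
    have h0 := Sym2.mem_mk_right (ue e) (ve e)
    rwa [← heq e he] at h0
  have hne_uv : ∀ e ∈ M, ue e ≠ ve e := by
    intro e he
    have h1 : e ∈ G.edgeSet := hedge e he
    rw [heq e he, SimpleGraph.mem_edgeSet] at h1
    exact h1.ne
  have hwin : ∀ (S : Finset (Sym2 V)) (e : Sym2 V), e ∈ M →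
      (e ∈ S → asg S (Sum.inl (ue e)) = true) ∧ (e ∉ S → asg S (Sum.inl (ve e)) = true) := by
    intro S e he
    constructor
    · intro heS
      simp only [hasg, decide_eq_true_eq]
      rintro ⟨e', he'M, (⟨he'S, hw⟩ | ⟨he'S, hw⟩)⟩
      · rcases eq_or_ne e' e with h' | hne
        · rw [h'] at he'S
          exact he'S heS
        · exact hdisj e he e' he'M (Ne.symm hne) (ue e) (hmemu e he) (hw ▸ hmemu e' he'M)
      · rcases eq_or_ne e' e with h' | hne
        · rw [h'] at hw
          exact hne_uv e he hw
        · exact hdisj e he e' he'M (Ne.symm hne) (ue e) (hmemu e he) (hw ▸ hmemv e' he'M)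
    · intro heS
      simp only [hasg, decide_eq_true_eq]
      rintro ⟨e', he'M, (⟨he'S, hw⟩ | ⟨he'S, hw⟩)⟩
      · rcases eq_or_ne e' e with h' | hne
        · rw [h'] at hw
          exact hne_uv e he hw.symm
        · exact hdisj e he e' he'M (Ne.symm hne) (ve e) (hmemv e he) (hw ▸ hmemu e' he'M)
      · rcases eq_or_ne e' e with h' | hne
        · rw [h'] at he'S
          exact heS he'S
        · exact hdisj e he e' he'M (Ne.symm hne) (ve e) (hmemv e he) (hw ▸ hmemv e' he'M)
  have hsat : ∀ S : Finset (Sym2 V), cnfSat G (asg S) := by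
    intro S e x y hxy
    by_cases hm : e.1 ∈ M
    · have hexy : s(ue e.1, ve e.1) = s(x, y) := by rw [← heq e.1 hm, ← hxy]
      rcases Sym2.eq_iff.1 hexy with ⟨h1, h2⟩ | ⟨h1, h2⟩
      · by_cases hS : e.1 ∈ S
        · left; rw [← h1]; exact (hwin S e.1 hm).1 hS
        · right; right; rw [← h2]; exact (hwin S e.1 hm).2 hS
      · by_cases hS : e.1 ∈ S
        · right; right; rw [← h1]; exact (hwin S e.1 hm).1 hS
        · left; rw [← h2]; exact (hwin S e.1 hm).2 hS
    · right; left; simp [hasg, hm]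
  -- for each subset, a computational path with its `c`-piece decomposition
  have hex : ∀ S : Finset (Sym2 V), ∃ ps : List (List Z.E), ps.length = c ∧
      Z.IsRootLeafPath ps.flatten ∧ Z.Consistent ps.flatten ∧
      (∀ l ∈ Z.lits ps.flatten, asg S l.1 = l.2) ∧
      ∀ q ∈ ps, ((q.filterMap Z.label).map (fun l => σ l.1)).Pairwise (· < ·) := by
    intro S
    obtain ⟨p, hrl, hcons, hagr⟩ := (hcomp (asg S)).1 (hsat S)
    obtain ⟨ps, hlen, hflat, hsort⟩ := hdecomp p hrl hcons
    rw [← hflat] at hrl hcons hagr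
    exact ⟨ps, hlen, hrl, hcons, hagr, hsort⟩
  choose ps hlen hrl hcons hagr hsort using hex
  -- the signature map
  set Φ : Finset (Sym2 V) → (Fin (2 * c - 1) → Fin Z.n) := fun S j =>
    (Z.nodeSeq P (ps S)).getD j Z.leaf with hΦ
  have hkey : ∀ S S' : Finset (Sym2 V), Φ S = Φ S' → ∀ e₀ ∈ M, e₀ ∈ S' → e₀ ∈ S := by
    intro S S' hΦeq e₀ he₀M he₀S'
    by_contra he₀S
    have hpsne : ps S ≠ [] := by
      intro h
      have h2 := hlen S
      rw [h] at h2
      simp at h2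
      omega
    have hpsne' : ps S' ≠ [] := by
      intro h
      have := hlen S'
      rw [h] at this
      simp at this
      omega
    have hlenseq : (Z.nodeSeq P (ps S)).length = 2 * c := by
      rw [NBP.length_nodeSeq, hlen]
    have hlenseq' : (Z.nodeSeq P (ps S')).length = 2 * c := by
      rw [NBP.length_nodeSeq, hlen]
    have hseq : Z.nodeSeq P (ps S) = Z.nodeSeq P (ps S') := by
      apply List.ext_getElem (by rw [hlenseq, hlenseq'])
      intro j hj hj'
      rcases lt_or_ge j (2 * c - 1) with hlt | hge
      · have h1 := congrFun hΦeq ⟨j, hlt⟩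
        simp only [hΦ] at h1
        rwa [List.getD_eq_getElem _ _ hj, List.getD_eq_getElem _ _ hj'] at h1
      · have hj_eq : j = 2 * c - 1 := by
          rw [hlenseq] at hj
          omega
        have g1 : (Z.nodeSeq P (ps S)).getD j Z.leaf = Z.leaf := by
          rw [hj_eq, ← hlen S]
          exact Z.nodeSeq_getD_last P (ps S) hpsne
        have g2 : (Z.nodeSeq P (ps S')).getD j Z.leaf = Z.leaf := by
          rw [hj_eq, ← hlen S']
          exact Z.nodeSeq_getD_last P (ps S') hpsne'
        rw [List.getD_eq_getElem _ _ hj] at g1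
        rw [List.getD_eq_getElem _ _ hj'] at g2
        rw [g1, g2]
    obtain ⟨hft, hfne⟩ := NBP.pathFT_of_rootLeaf (hrl S)
    obtain ⟨hft', hfne'⟩ := NBP.pathFT_of_rootLeaf (hrl S')
    have hglue := NBP.glue (P := P) hft hft' hseq
    set pstar := Z.splice P (ps S) (ps S') with hpstar
    have hpne : pstar ≠ [] := by
      intro h
      have hrl2 : Z.root = Z.leaf := by
        have h3 := hglue.2.2
        rw [h] at h3
        exact h3
      have h4 := NBP.pathFT_lt hft hfne
      rw [hrl2] at h4
      exact lt_irrefl _ h4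
    have hrlstar : Z.IsRootLeafPath pstar := NBP.rootLeaf_of_pathFT hglue hpne
    set b : CNFVar G → Bool := fun x => if σ x < θ then asg S x else asg S' x with hb
    have hagree : ∀ l ∈ Z.lits pstar, b l.1 = l.2 := by
      rintro ⟨x, val⟩ hmem
      obtain ⟨e, hep, hlab⟩ := hmem
      rcases NBP.mem_splice hep with ⟨q, hq, hqe⟩ | ⟨q, hq, hqe⟩
      · have hPe : P e = true := List.mem_takeWhile_imp hqe
        have hbel : σ x < θ := by
          simp only [hPdef, decide_eq_true_eq] at hPe
          exact hPe (x, val) hlab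
        have hel : e ∈ (ps S).flatten :=
          List.mem_flatten.2 ⟨q, hq, (List.takeWhile_sublist P).subset hqe⟩
        have h5 := hagr S (x, val) ⟨e, hel, hlab⟩
        simp only [hb]
        simpa [hbel] using h5
      · have habv : θ ≤ σ x := NBP.dropWhile_above (hsort S' q hq) hqe hlab
        have hel : e ∈ (ps S').flatten :=
          List.mem_flatten.2 ⟨q, hq, (List.dropWhile_sublist P).subset hqe⟩
        have h5 := hagr S' (x, val) ⟨e, hel, hlab⟩
        simp only [hb]
        simpa [not_lt.2 habv] using h5
    have hconsstar : Z.Consistent pstar := by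
      intro x hx
      obtain ⟨hp1, hp2⟩ := hx
      have e1 := hagree (x, true) hp1
      have e2 := hagree (x, false) hp2
      simp at e1 e2
      rw [e1] at e2
      exact Bool.true_eq_false.mp e2
    have hbsat : cnfSat G b := (hcomp b).2 ⟨pstar, hrlstar, hconsstar, hagree⟩
    have hedge₀ : e₀ ∈ G.edgeSet := hedge e₀ he₀M
    have hclause := hbsat ⟨e₀, hedge₀⟩ (ue e₀) (ve e₀) (heq e₀ he₀M)
    have hulow : σ (Sum.inl (ue e₀)) < θ := hbelow _ (hua e₀ he₀M)
    have hvhigh : θ ≤ σ (Sum.inl (ve e₀)) := habove _ (hvb e₀ he₀M)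
    have hSfalse : asg S (Sum.inl (ue e₀)) = false := by
      simp only [hasg, decide_eq_false_iff_not, not_not]
      exact ⟨e₀, he₀M, Or.inl ⟨he₀S, rfl⟩⟩
    have hS'false : asg S' (Sum.inl (ve e₀)) = false := by
      simp only [hasg, decide_eq_false_iff_not, not_not]
      exact ⟨e₀, he₀M, Or.inr ⟨he₀S', rfl⟩⟩
    rcases hclause with h | h | h
    · rw [hb] at h
      simp only [hulow, if_pos] at h
      rw [hSfalse] at h
      exact Bool.false_ne_true h
    · rw [hb] at h
      by_cases hc' : σ (Sum.inr (⟨e₀, hedge₀⟩ : G.edgeSet)) < θ <;>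
        simp [hc', hasg, he₀M] at h
    · rw [hb] at h
      simp only [not_lt.2 hvhigh, if_neg, if_false] at h
      rw [hS'false] at h
      exact Bool.false_ne_true h
  have hinjΦ : Set.InjOn Φ ↑M.powerset := by
    intro S hS S' hS' hEq
    have hS1 : S ⊆ M := Finset.mem_powerset.1 hS
    have hS1' : S' ⊆ M := Finset.mem_powerset.1 hS'
    apply Finset.Subset.antisymm
    · intro e he
      exact hkey S' S hEq.symm e (hS1 he) he
    · intro e he
      exact hkey S S' hEq e (hS1' he) he
  have hcount : M.powerset.card ≤ (Finset.univ : Finset (Fin (2 * c - 1) → Fin Z.n)).card :=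
    Finset.card_le_card_of_injOn Φ (fun _ _ => Finset.mem_univ _) hinjΦ
  rw [Finset.card_powerset, Finset.card_univ, Fintype.card_fun, Fintype.card_fin,
    Fintype.card_fin] at hcount
  have hfinal : 2 ^ t ≤ Z.n ^ (2 * c - 1) :=
    le_trans (Nat.pow_le_pow_right (by norm_num) htM) hcount
  have hd0 : (2 * c - 1 : ℕ) ≠ 0 := by omega
  have hcast : ((2 * c - 1 : ℕ) : ℝ) = 2 * (c : ℝ) - 1 := by
    have h1 : 1 ≤ 2 * c := by omega
    push_cast [h1]
    ring
  apply le_of_pow_le_pow_left₀ hd0 (by positivity)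
  have hlhs : ((2 : ℝ) ^ ((t : ℝ) / (2 * (c : ℝ) - 1))) ^ (2 * c - 1 : ℕ) = 2 ^ (t : ℝ) := by
    rw [← Real.rpow_natCast ((2 : ℝ) ^ ((t : ℝ) / (2 * (c : ℝ) - 1))) (2 * c - 1),
      ← Real.rpow_mul (by norm_num), hcast]
    congr 1
    have hD : (2 * (c : ℝ) - 1) ≠ 0 := by
      rw [← hcast]
      exact_mod_cast hd0
    field_simp
  rw [hlhs, Real.rpow_natCast]
  exact_mod_cast hfinal
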